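/- Specialisation criterion: let ρ be an arc in G and [v,w] ∈ ℙ(V⊕W) with v,w ≠ 0. The specialisation of ρ.[v,w] (the image of the closed point under the R-point of ℙ(V⊕W) extending ρ.[v,w] via the valuative criterion) lies in ℙ(0⊕W) if and only if ν(ρ,[v,w]) < 0. -/

import Mathlib

/-- `K = ℂ((z))`, the field of formal Laurent series. -/
abbrev K : Type := LaurentSeries ℂ

/-- The minimal `z`-adic valuation among the nonzero coordinates of a tuple. -/
noncomputable def minOrd {ι : Type*} (a : ι → K) : ℤ :=
  sInf {m : ℤ | ∃ i, a i ≠ 0 ∧ (a i).order = m}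

/-- The weight of an arc on a pair, from the coordinate tuples `a` of `ρ.v`
and `b` of `ρ.w`. -/
noncomputable def wt {ι κ : Type*} (a : ι → K) (b : κ → K) : ℤ :=
  minOrd b - minOrd a

lemma minOrd_set_eq {ι : Type*} (a : ι → K) :
    {m : ℤ | ∃ i, a i ≠ 0 ∧ (a i).order = m} =
      (fun i => (a i).order) '' {i | a i ≠ 0} := by
  ext m; simp [Set.mem_image, and_comm, eq_comm]

lemma minOrd_bddBelow {ι : Type*} [Fintype ι] (a : ι → K) :
    BddBelow {m : ℤ | ∃ i, a i ≠ 0 ∧ (a i).order = m} := by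
  rw [minOrd_set_eq]
  exact (Set.toFinite _).image _ |>.bddBelow

lemma minOrd_mem {ι : Type*} [Fintype ι] (a : ι → K) (ha : ∃ i, a i ≠ 0) :
    minOrd a ∈ {m : ℤ | ∃ i, a i ≠ 0 ∧ (a i).order = m} := by
  obtain ⟨i, hi⟩ := ha
  exact Int.csInf_mem ⟨(a i).order, i, hi, rfl⟩ (minOrd_bddBelow a)

lemma minOrd_le {ι : Type*} [Fintype ι] (a : ι → K) {i : ι} (hi : a i ≠ 0) :
    minOrd a ≤ (a i).order :=
  csInf_le (minOrd_bddBelow a) ⟨i, hi, rfl⟩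

lemma minOrd_sum {ι κ : Type*} [Fintype ι] [Fintype κ] (a : ι → K) (b : κ → K)
    (ha : ∃ i, a i ≠ 0) (hb : ∃ j, b j ≠ 0) :
    minOrd (Sum.elim a b) = min (minOrd a) (minOrd b) := by
  obtain ⟨i, hi⟩ := ha
  obtain ⟨j, hj⟩ := hb
  have hset : {m : ℤ | ∃ s, Sum.elim a b s ≠ 0 ∧ (Sum.elim a b s).order = m} =
      {m : ℤ | ∃ i, a i ≠ 0 ∧ (a i).order = m} ∪
      {m : ℤ | ∃ j, b j ≠ 0 ∧ (b j).order = m} := by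
    ext m
    constructor
    · rintro ⟨s | s, hs, rfl⟩
      · exact Or.inl ⟨s, hs, rfl⟩
      · exact Or.inr ⟨s, hs, rfl⟩
    · rintro (⟨i, hi, rfl⟩ | ⟨j, hj, rfl⟩)
      · exact ⟨Sum.inl i, hi, rfl⟩
      · exact ⟨Sum.inr j, hj, rfl⟩
  unfold minOrd
  rw [hset, csInf_union (minOrd_bddBelow a) ⟨_, i, hi, rfl⟩
    (minOrd_bddBelow b) ⟨_, j, hj, rfl⟩]

/-- Specialisation criterion.  Let `a`, `b` be the (not
identically zero) homogeneous `K`-coordinate tuples of `ρ.[v,w]` in `V` and `W`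
respectively.  The `R = ℂ[[z]]`-point of `ℙ(V⊕W)` extending `ρ.[v,w]` by the
valuative criterion is represented by clearing poles: with
`μ = min ord₀` over all coordinates, the specialisation (image of the closed
point of `Spec R`) has homogeneous coordinates `spec s = coeff_μ` of the
corresponding coordinate.  The specialisation lies in `ℙ(0⊕W)` — i.e. all of
its `V`-coordinates vanish — if and only if `ν(ρ,[v,w]) < 0`. -/
theorem specialisation_criterion {ι κ : Type*} [Fintype ι] [Fintype κ]
    (a : ι → K) (b : κ → K)
    (ha : ∃ i, a i ≠ 0) (hb : ∃ j, b j ≠ 0)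
    (μ : ℤ) (hμ : μ = minOrd (Sum.elim a b))
    (spec : ι ⊕ κ → ℂ) (hspec : ∀ s, spec s = (Sum.elim a b s).coeff μ) :
    (∀ i, spec (Sum.inl i) = 0) ↔ wt a b < 0 := by
  rw [minOrd_sum a b ha hb] at hμ
  constructor
  · intro h
    by_contra hlt
    push_neg at hlt
    unfold wt at hlt
    have hle : minOrd a ≤ minOrd b := by linarith
    have hμa : μ = minOrd a := by rw [hμ, min_eq_left hle]
    obtain ⟨i, hi, hord⟩ := minOrd_mem a ha
    have := h i
    rw [hspec] at this
    simp only [Sum.elim_inl] at this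
    rw [hμa, ← hord] at this
    exact hi (HahnSeries.coeff_order_eq_zero.mp this)
  · intro h i
    rw [hspec]
    simp only [Sum.elim_inl]
    rcases eq_or_ne (a i) 0 with h0 | h0
    · simp [h0]
    · apply HahnSeries.coeff_eq_zero_of_lt_order
      have h1 : minOrd b < minOrd a := by unfold wt at h; linarith
      have h2 : μ = minOrd b := by rw [hμ, min_eq_right h1.le]
      have h3 := minOrd_le a h0
      omega
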